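/- Let L ≥ 2, d_0 ≥ 1, d_L ≥ 1, and 1 ≤ r ≤ min{d_0, d_L}. Let U₁ ∈ ℝ^{d_L×r} and V₁ ∈ ℝ^{d_0×r} have orthonormal columns, and let μ > 0. Then the symmetric d_L d_0 × d_L d_0 matrix G = μ^{2(L−1)} ( U₁U₁ᵀ ⊗ I_{d_0} + I_{d_L} ⊗ V₁V₁ᵀ + (L−2) U₁U₁ᵀ ⊗ V₁V₁ᵀ ) has exactly two distinct nonzero eigenvalues: L μ^{2(L−1)} with multiplicity r², and μ^{2(L−1)} with multiplicity (d_0 + d_L − 2r)r; the eigenvalue 0 has multiplicity (d_L − r)(d_0 − r). -/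

import Mathlib

open Matrix Polynomial
open scoped Kronecker

lemma aux_charpoly_conj {n : Type*} [Fintype n] [DecidableEq n]
    (W A B : Matrix n n ℝ) (h : W * B = 1) :
    (W * A * B).charpoly = A.charpoly := by
  have hmap : (W.map C) * (B.map C) = 1 := by
    have := congrArg (RingHom.mapMatrix (C : ℝ →+* ℝ[X])) h
    simpa [RingHom.mapMatrix_apply, Matrix.map_one] using this
  have key : charmatrix (W * A * B) = W.map C * charmatrix A * B.map C := by
    unfold charmatrix
    simp only [RingHom.mapMatrix_apply, Matrix.map_mul, mul_sub, sub_mul]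
    congr 1
    have hcomm : Matrix.scalar n (X : ℝ[X]) * (W.map C) = (W.map C) * Matrix.scalar n (X : ℝ[X]) :=
      (Matrix.scalar_commute (X : ℝ[X]) (fun r' => Commute.all _ _) (W.map C)).eq
    rw [← hcomm, mul_assoc, hmap, mul_one]
  unfold Matrix.charpoly
  rw [key, det_mul, det_mul, mul_right_comm, ← det_mul, hmap, det_one, one_mul]

lemma aux_charpoly_diagonal {n : Type*} [Fintype n] [DecidableEq n] (d : n → ℝ) :
    (Matrix.diagonal d).charpoly = ∏ i, (X - C (d i)) := by
  unfold Matrix.charpoly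
  have : charmatrix (Matrix.diagonal d) = Matrix.diagonal fun i => X - C (d i) := by
    apply Matrix.ext; intro i j
    by_cases h : i = j
    · subst h; simp
    · simp [charmatrix_apply, Matrix.diagonal_apply_ne _ h]
  rw [this, det_diagonal]

lemma aux_roots_diagonal {n : Type*} [Fintype n] [DecidableEq n] (d : n → ℝ) :
    (Matrix.diagonal d).charpoly.roots = Finset.univ.val.map d := by
  rw [aux_charpoly_diagonal]
  have : ∏ i, (X - C (d i)) = ((Finset.univ.val.map d).map fun a => X - C a).prod := by
    rw [Multiset.map_map]; rfl
  rw [this, Polynomial.roots_multiset_prod_X_sub_C]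


lemma aux_filter_eq {n r : ℕ} (hr : r ≤ n) :
    Finset.univ.filter (fun i : Fin n => (i : ℕ) < r) = Finset.univ.map (Fin.castLEEmb hr) := by
  ext i
  simp only [Finset.mem_filter, Finset.mem_univ, true_and, Finset.mem_map]
  constructor
  · intro h; exact ⟨⟨i, h⟩, by ext; simp [Fin.castLEEmb, Fin.castLE]⟩
  · rintro ⟨a, rfl⟩; exact a.isLt

lemma aux_card_filter {n r : ℕ} (hr : r ≤ n) :
    (Finset.univ.filter (fun i : Fin n => (i : ℕ) < r)).card = r := by
  rw [aux_filter_eq hr]; simp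

lemma aux_exists_ext {n r : ℕ} (hr : r ≤ n) (A : Matrix (Fin n) (Fin r) ℝ)
    (hA : Aᵀ * A = 1) :
    ∃ U : Matrix (Fin n) (Fin n) ℝ, Uᵀ * U = 1 ∧
      A * Aᵀ = U * Matrix.diagonal (fun i : Fin n => if (i : ℕ) < r then (1 : ℝ) else 0) * Uᵀ := by
  classical
  set v : Fin n → EuclideanSpace ℝ (Fin n) :=
    fun i => if h : (i : ℕ) < r then WithLp.toLp 2 (fun j => A j ⟨i, h⟩) else 0 with hv
  have hinner : ∀ (i j : Fin n) (hi : (i : ℕ) < r) (hj : (j : ℕ) < r),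
      (inner ℝ (v i) (v j) : ℝ) = if i = j then 1 else 0 := by
    intro i j hi hj
    have h1 : ((1 : Matrix (Fin r) (Fin r) ℝ) ⟨i, hi⟩ ⟨j, hj⟩) = if i = j then (1 : ℝ) else 0 := by
      rw [Matrix.one_apply]
      congr 1
      simp [Fin.ext_iff]
    rw [← hA] at h1
    rw [← h1, Matrix.mul_apply]
    rw [PiLp.inner_apply]
    simp [hv, hi, hj, Matrix.transpose_apply, RCLike.inner_apply, mul_comm]
  have horth : Orthonormal ℝ (Set.restrict {i : Fin n | (i : ℕ) < r} v) := by
    rw [orthonormal_iff_ite]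
    rintro ⟨i, hi⟩ ⟨j, hj⟩
    simp only [Subtype.mk.injEq]; exact hinner i j hi hj
  obtain ⟨b, hb⟩ := horth.exists_orthonormalBasis_extension_of_card_eq (by simp) 
  refine ⟨Matrix.of (fun j i => b i j), ?_, ?_⟩
  · apply Matrix.ext; intro i k
    have h2 := orthonormal_iff_ite.mp b.orthonormal i k
    rw [PiLp.inner_apply] at h2
    simp only [RCLike.inner_apply, starRingEnd_apply, star_trivial] at h2
    simp only [Matrix.mul_apply, Matrix.transpose_apply, Matrix.of_apply, Matrix.one_apply]
    rw [← h2]; exact Finset.sum_congr rfl fun _ _ => mul_comm _ _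
  · apply Matrix.ext; intro j k
    have hcol : ∀ i' : Fin r, (fun i => b i j * (if (i : ℕ) < r then (1:ℝ) else 0) * b i k)
        (Fin.castLE hr i') = A j i' * A k i' := by
      intro i'
      have hmem : ((Fin.castLE hr i' : Fin n) : ℕ) < r := i'.isLt
      have hbv := hb (Fin.castLE hr i') hmem
      simp only [hv] at hbv
      rw [dif_pos hmem] at hbv
      have : b (Fin.castLE hr i') = fun j => A j i' := by
        simp [hbv]
      simp [this, hmem, mul_comm]
    calc (A * Aᵀ) j k = ∑ i' : Fin r, A j i' * A k i' := by
          simp [Matrix.mul_apply, Matrix.transpose_apply]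
      _ = ∑ i ∈ Finset.univ.map (Fin.castLEEmb hr),
            b i j * (if (i : ℕ) < r then (1:ℝ) else 0) * b i k := by
          rw [Finset.sum_map]
          exact (Finset.sum_congr rfl fun i' _ => (hcol i').symm)
      _ = ∑ i : Fin n, b i j * (if (i : ℕ) < r then (1:ℝ) else 0) * b i k := by
          rw [← aux_filter_eq hr, Finset.sum_filter]
          apply Finset.sum_congr rfl
          intro i _
          by_cases h : (i : ℕ) < r <;> simp [h]
      _ = (Matrix.of (fun j i => b i j) * Matrix.diagonal (fun i : Fin n => if (i : ℕ) < r then (1 : ℝ) else 0) * (Matrix.of (fun j i => b i j))ᵀ) j k := by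
          simp [Matrix.mul_apply, Matrix.diagonal, Matrix.transpose_apply, Finset.sum_mul]


lemma aux_card_filter' {n r : ℕ} (hr : r ≤ n) :
    (Finset.univ.filter (fun i : Fin n => (i : ℕ) < r)).card = r := by
  have : Finset.univ.filter (fun i : Fin n => (i : ℕ) < r)
      = Finset.univ.map (Fin.castLEEmb hr) := by
    ext i
    simp only [Finset.mem_filter, Finset.mem_univ, true_and, Finset.mem_map]
    constructor
    · intro h; exact ⟨⟨i, h⟩, by ext; simp [Fin.castLEEmb, Fin.castLE]⟩
    · rintro ⟨a, rfl⟩; exact a.isLt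
  rw [this]; simp

lemma aux_card_filter_not {n r : ℕ} (hr : r ≤ n) :
    (Finset.univ.filter (fun i : Fin n => ¬ (i : ℕ) < r)).card = n - r := by
  have h := Finset.card_filter_add_card_filter_not
    (s := (Finset.univ : Finset (Fin n))) (p := fun i : Fin n => (i : ℕ) < r)
  rw [aux_card_filter' hr] at h
  simp only [Finset.card_univ, Fintype.card_fin] at h
  omega

lemma aux_count {d0 dL r : ℕ} (hrd0 : r ≤ d0) (hrdL : r ≤ dL)
    (a b : ℝ) (hab : a ≠ b) (ha : a ≠ 0) (hb : b ≠ 0)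
    (g : Fin dL × Fin d0 → ℝ)
    (hg : ∀ x, g x = if (x.1 : ℕ) < r then (if (x.2 : ℕ) < r then a else b)
        else (if (x.2 : ℕ) < r then b else 0)) :
    Finset.univ.val.map g = Multiset.replicate (r * r) a +
      Multiset.replicate ((d0 + dL - 2 * r) * r) b +
      Multiset.replicate ((dL - r) * (d0 - r)) 0 := by
  classical
  apply Multiset.ext.mpr
  intro x
  rw [Multiset.count_map]
  have hval : (Finset.univ.val.filter fun y => x = g y).card
      = (Finset.univ.filter (fun y : Fin dL × Fin d0 => x = g y)).card := rfl
  rw [hval]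
  simp only [Multiset.count_add, Multiset.count_replicate]
  have hprod : ∀ (P : Fin dL → Prop) (Q : Fin d0 → Prop)
      [DecidablePred P] [DecidablePred Q],
      Finset.filter (fun y : Fin dL × Fin d0 => P y.1 ∧ Q y.2) Finset.univ
        = (Finset.univ.filter P) ×ˢ (Finset.univ.filter Q) := by
    intro P Q _ _
    rw [← Finset.univ_product_univ, Finset.filter_product]
  by_cases hxa : x = a
  · have hxb : ¬ x = b := by rw [hxa]; exact hab
    have hx0 : ¬ x = 0 := by rw [hxa]; exact ha
    have heq : Finset.filter (fun y : Fin dL × Fin d0 => x = g y) Finset.univ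
        = Finset.filter (fun y : Fin dL × Fin d0 => (y.1 : ℕ) < r ∧ (y.2 : ℕ) < r)
            Finset.univ := by
      apply Finset.filter_congr
      intro y _
      rw [hg]
      by_cases h1 : (y.1 : ℕ) < r <;> by_cases h2 : (y.2 : ℕ) < r <;>
        simp [h1, h2, hxa, hxb, hx0, hab, ha, hb, Ne.symm hab, Ne.symm ha, Ne.symm hb]
    rw [heq, hprod (fun t : Fin dL => (t:ℕ) < r) (fun t : Fin d0 => (t:ℕ) < r), Finset.card_product, aux_card_filter' hrdL, aux_card_filter' hrd0]
    simp [hxa, Ne.symm hab, Ne.symm ha, hab, ha, hb]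
  · by_cases hxb : x = b
    · have hx0 : ¬ x = 0 := by rw [hxb]; exact hb
      have heq : Finset.filter (fun y : Fin dL × Fin d0 => x = g y) Finset.univ
          = Finset.filter (fun y : Fin dL × Fin d0 =>
              ((y.1 : ℕ) < r ∧ ¬ (y.2 : ℕ) < r) ∨ (¬ (y.1 : ℕ) < r ∧ (y.2 : ℕ) < r))
              Finset.univ := by
        apply Finset.filter_congr
        intro y _
        rw [hg]
        by_cases h1 : (y.1 : ℕ) < r <;> by_cases h2 : (y.2 : ℕ) < r <;>
          simp [h1, h2, hxa, hxb, hx0, hab, ha, hb, Ne.symm hab, Ne.symm ha, Ne.symm hb]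
      rw [heq, Finset.filter_or, Finset.card_union_of_disjoint,
        hprod (fun t : Fin dL => (t:ℕ) < r) (fun t : Fin d0 => ¬ (t:ℕ) < r),
        hprod (fun t : Fin dL => ¬ (t:ℕ) < r) (fun t : Fin d0 => (t:ℕ) < r),
        Finset.card_product, Finset.card_product, aux_card_filter' hrdL,
        aux_card_filter' hrd0, aux_card_filter_not hrdL, aux_card_filter_not hrd0]
      · have h1 : d0 + dL - 2 * r = (d0 - r) + (dL - r) := by omega
        have h2 : (d0 + dL - 2 * r) * r = r * (d0 - r) + (dL - r) * r := by
          rw [h1, Nat.add_mul, Nat.mul_comm r (d0 - r)]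
        rw [h2]
        simp [hxb, Ne.symm hab, Ne.symm hb, hab, ha, hb]
      · rw [hprod (fun t : Fin dL => (t:ℕ) < r) (fun t : Fin d0 => ¬ (t:ℕ) < r),
          hprod (fun t : Fin dL => ¬ (t:ℕ) < r) (fun t : Fin d0 => (t:ℕ) < r)]
        apply Finset.disjoint_left.mpr
        intro y hy1 hy2
        simp only [Finset.mem_product, Finset.mem_filter] at hy1 hy2
        tauto
    · by_cases hx0 : x = 0
      · have heq : Finset.filter (fun y : Fin dL × Fin d0 => x = g y) Finset.univ
            = Finset.filter (fun y : Fin dL × Fin d0 =>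
                (¬ (y.1 : ℕ) < r) ∧ (¬ (y.2 : ℕ) < r)) Finset.univ := by
          apply Finset.filter_congr
          intro y _
          rw [hg]
          by_cases h1 : (y.1 : ℕ) < r <;> by_cases h2 : (y.2 : ℕ) < r <;>
            simp [h1, h2, hxa, hxb, hx0, hab, ha, hb, Ne.symm hab, Ne.symm ha, Ne.symm hb]
        rw [heq, hprod (fun t : Fin dL => ¬ (t:ℕ) < r) (fun t : Fin d0 => ¬ (t:ℕ) < r),
          Finset.card_product, aux_card_filter_not hrdL, aux_card_filter_not hrd0]
        simp [hx0, Ne.symm ha, Ne.symm hb, hab, ha, hb]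
      · have heq : Finset.filter (fun y : Fin dL × Fin d0 => x = g y) Finset.univ = ∅ := by
          apply Finset.filter_false_of_mem
          intro y _
          rw [hg]
          split_ifs <;> assumption
        rw [heq]
        simp [hxa, hxb, hx0, Ne.symm hxa, Ne.symm hxb, Ne.symm hx0, hab, ha, hb]


/-- Under uniform spectral initialization with common singular value `μ > 0`,
the Gram matrix `G = μ^{2(L−1)} (U₁U₁ᵀ ⊗ I_{d₀} + I_{d_L} ⊗ V₁V₁ᵀ + (L−2) U₁U₁ᵀ ⊗ V₁V₁ᵀ)`
of the outer-product Hessian of a depth-`L` deep linear network has exactly two distinct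
nonzero eigenvalues: `L μ^{2(L−1)}` with multiplicity `r²` and `μ^{2(L−1)}` with
multiplicity `(d₀ + d_L − 2r)r`; the eigenvalue `0` has multiplicity `(d_L − r)(d₀ − r)`. -/
theorem statement1 (L d0 dL r : ℕ) (hL : 2 ≤ L) (hd0 : 1 ≤ d0) (hdL : 1 ≤ dL)
    (hr1 : 1 ≤ r) (hr : r ≤ min d0 dL)
    (U1 : Matrix (Fin dL) (Fin r) ℝ) (V1 : Matrix (Fin d0) (Fin r) ℝ)
    (hU1 : U1ᵀ * U1 = 1) (hV1 : V1ᵀ * V1 = 1)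
    (μ : ℝ) (hμ : 0 < μ)
    (G : Matrix (Fin dL × Fin d0) (Fin dL × Fin d0) ℝ)
    (hGdef : G = μ ^ (2 * (L - 1)) •
      ((U1 * U1ᵀ) ⊗ₖ (1 : Matrix (Fin d0) (Fin d0) ℝ) +
        (1 : Matrix (Fin dL) (Fin dL) ℝ) ⊗ₖ (V1 * V1ᵀ) +
        ((L : ℝ) - 2) • ((U1 * U1ᵀ) ⊗ₖ (V1 * V1ᵀ))))
    (hG : G.IsHermitian) :
    Finset.univ.val.map hG.eigenvalues =
        Multiset.replicate (r * r) ((L : ℝ) * μ ^ (2 * (L - 1))) +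
        Multiset.replicate ((d0 + dL - 2 * r) * r) (μ ^ (2 * (L - 1))) +
        Multiset.replicate ((dL - r) * (d0 - r)) (0 : ℝ) ∧
    (L : ℝ) * μ ^ (2 * (L - 1)) ≠ μ ^ (2 * (L - 1)) ∧
    μ ^ (2 * (L - 1)) ≠ 0 := by
  have hrd0 : r ≤ d0 := hr.trans (min_le_left _ _)
  have hrdL : r ≤ dL := hr.trans (min_le_right _ _)
  set c : ℝ := μ ^ (2 * (L - 1)) with hcdef
  have hcpos : 0 < c := pow_pos hμ _
  have hc0 : c ≠ 0 := ne_of_gt hcpos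
  have hL2 : (2 : ℝ) ≤ (L : ℝ) := by exact_mod_cast hL
  have hLcne : (L : ℝ) * c ≠ c := by
    intro h
    have h2 : (L : ℝ) * c = 1 * c := by rw [h, one_mul]
    have := mul_right_cancel₀ hc0 h2
    linarith
  have hLc0 : (L : ℝ) * c ≠ 0 := mul_ne_zero (by linarith) hc0
  refine ⟨?_, hLcne, hc0⟩
  obtain ⟨U, hUo, hUP⟩ := aux_exists_ext hrdL U1 hU1
  obtain ⟨V, hVo, hVP⟩ := aux_exists_ext hrd0 V1 hV1
  have hUU : U * Uᵀ = 1 := mul_eq_one_comm.mp hUo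
  have hVV : V * Vᵀ = 1 := mul_eq_one_comm.mp hVo
  set p : Fin dL → ℝ := fun i => if (i : ℕ) < r then 1 else 0 with hp
  set q : Fin d0 → ℝ := fun i => if (i : ℕ) < r then 1 else 0 with hq
  set W := U ⊗ₖ V with hWdef
  have hW : W * Wᵀ = 1 := by
    rw [hWdef, ← Matrix.kroneckerMap_transpose, ← Matrix.mul_kronecker_mul, hUU, hVV,
      Matrix.one_kronecker_one]
  set g : Fin dL × Fin d0 → ℝ :=
    fun x => c * (p x.1 + q x.2 + ((L : ℝ) - 2) * (p x.1 * q x.2)) with hgdef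
  have e1 : (U1 * U1ᵀ) ⊗ₖ (1 : Matrix (Fin d0) (Fin d0) ℝ)
      = W * Matrix.diagonal (fun x : Fin dL × Fin d0 => p x.1) * Wᵀ := by
    have h1 : (1 : Matrix (Fin d0) (Fin d0) ℝ)
        = V * Matrix.diagonal (fun _ : Fin d0 => (1 : ℝ)) * Vᵀ := by
      rw [Matrix.diagonal_one, mul_one, hVV]
    rw [hUP, h1, Matrix.mul_kronecker_mul, Matrix.mul_kronecker_mul,
      Matrix.kroneckerMap_transpose, Matrix.diagonal_kronecker_diagonal]
    have h2 : (fun x : Fin dL × Fin d0 => p x.1 * 1) = fun x : Fin dL × Fin d0 => p x.1 := by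
      funext x; ring
    rw [h2, hWdef]
  have e2 : (1 : Matrix (Fin dL) (Fin dL) ℝ) ⊗ₖ (V1 * V1ᵀ)
      = W * Matrix.diagonal (fun x : Fin dL × Fin d0 => q x.2) * Wᵀ := by
    have h1 : (1 : Matrix (Fin dL) (Fin dL) ℝ)
        = U * Matrix.diagonal (fun _ : Fin dL => (1 : ℝ)) * Uᵀ := by
      rw [Matrix.diagonal_one, mul_one, hUU]
    rw [hVP, h1, Matrix.mul_kronecker_mul, Matrix.mul_kronecker_mul,
      Matrix.kroneckerMap_transpose, Matrix.diagonal_kronecker_diagonal]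
    have h2 : (fun x : Fin dL × Fin d0 => 1 * q x.2) = fun x : Fin dL × Fin d0 => q x.2 := by
      funext x; ring
    rw [h2, hWdef]
  have e3 : (U1 * U1ᵀ) ⊗ₖ (V1 * V1ᵀ)
      = W * Matrix.diagonal (fun x : Fin dL × Fin d0 => p x.1 * q x.2) * Wᵀ := by
    rw [hUP, hVP, Matrix.mul_kronecker_mul, Matrix.mul_kronecker_mul,
      Matrix.kroneckerMap_transpose, Matrix.diagonal_kronecker_diagonal, hWdef]
  have hdiag : Matrix.diagonal g
      = c • (Matrix.diagonal (fun x : Fin dL × Fin d0 => p x.1)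
        + Matrix.diagonal (fun x : Fin dL × Fin d0 => q x.2)
        + ((L : ℝ) - 2) • Matrix.diagonal (fun x : Fin dL × Fin d0 => p x.1 * q x.2)) := by
    apply Matrix.ext; intro i j
    by_cases hij : i = j
    · subst hij
      simp only [Matrix.diagonal_apply_eq, Matrix.smul_apply, Matrix.add_apply, smul_eq_mul,
        hgdef]
      try ring
    · simp [Matrix.diagonal_apply_ne _ hij]
  have hGconj : G = W * Matrix.diagonal g * Wᵀ := by
    rw [hGdef, e1, e2, e3, hdiag]
    simp only [Matrix.mul_smul, Matrix.smul_mul, mul_add, add_mul, smul_add]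
  have hcharG : G.charpoly = (Matrix.diagonal g).charpoly := by
    rw [hGconj]; exact aux_charpoly_conj W (Matrix.diagonal g) Wᵀ hW
  have hUe : (hG.eigenvectorUnitary : Matrix (Fin dL × Fin d0) (Fin dL × Fin d0) ℝ) *
      star (hG.eigenvectorUnitary : Matrix (Fin dL × Fin d0) (Fin dL × Fin d0) ℝ) = 1 :=
    (Matrix.mem_unitaryGroup_iff).mp hG.eigenvectorUnitary.2
  have hofreal : Matrix.diagonal (RCLike.ofReal ∘ hG.eigenvalues)
      = Matrix.diagonal hG.eigenvalues := by
    rw [RCLike.ofReal_real_eq_id, Function.id_comp]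
  have hcharE : G.charpoly = (Matrix.diagonal hG.eigenvalues).charpoly := by
    conv_lhs => rw [hG.spectral_theorem]
    rw [hofreal]
    exact aux_charpoly_conj _ _ _ hUe
  have hroots1 : Finset.univ.val.map hG.eigenvalues = G.charpoly.roots := by
    rw [hcharE, aux_roots_diagonal]
  have hroots2 : G.charpoly.roots = Finset.univ.val.map g := by
    rw [hcharG, aux_roots_diagonal]
  rw [hroots1, hroots2]
  apply aux_count hrd0 hrdL ((L : ℝ) * c) c hLcne hLc0 hc0
  intro x
  simp only [hgdef, hp, hq]
  by_cases h1 : (x.1 : ℕ) < r <;> by_cases h2 : (x.2 : ℕ) < r <;> simp [h1, h2] <;> ring
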